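/- arXiv:2101.07731 — 8 statements merged into one kernel-verified Lean document; each statement's English description precedes it below -/
import Mathlib

section
/- For every index 1 ≤ i ≤ n and every j with max(1, i−W) ≤ j ≤ min(n, i+W), the recursively defined quantities of the LB_TI algorithm satisfy L(i,j) ≤ d(q_i, c_j) ≤ U(i,j). -/
/-- Correctness of the LB_TI recursion: for every index `1 ≤ i ≤ n` and every `j` with
`max 1 (i - W) ≤ j ≤ min n (i + W)`, the recursively defined quantities `L i j` and `U i j`
of the LB_TI algorithm satisfy `L i j ≤ d(q i, c j) ≤ U i j`. -/
theorem lbti_recursion_sound {X : Type*} [MetricSpace X]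
    (n W : ℕ) (hW : 1 ≤ W) (hn : 1 ≤ n)
    (q c : ℕ → X) (L U : ℕ → ℕ → ℝ)
    (hbase : ∀ j, 1 ≤ j → j ≤ min n (1 + W) →
      L 1 j = dist (q 1) (c j) ∧ U 1 j = dist (q 1) (c j))
    (hind : ∀ i j, 2 ≤ i → i ≤ n → max 1 (i - W) ≤ j → j ≤ min n (i + W - 1) →
      L i j = max (L (i - 1) j - dist (q (i - 1)) (q i))
                  (dist (q (i - 1)) (q i) - U (i - 1) j) ∧
      U i j = U (i - 1) j + dist (q (i - 1)) (q i))
    (htop : ∀ i, 2 ≤ i → i ≤ n → i + W ≤ n →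
      L i (i + W) = max (L i (i + W - 1) - dist (c (i + W - 1)) (c (i + W)))
                        (dist (c (i + W - 1)) (c (i + W)) - U i (i + W - 1)) ∧
      U i (i + W) = U i (i + W - 1) + dist (c (i + W - 1)) (c (i + W))) :
    ∀ i j, 1 ≤ i → i ≤ n → max 1 (i - W) ≤ j → j ≤ min n (i + W) →
      L i j ≤ dist (q i) (c j) ∧ dist (q i) (c j) ≤ U i j := by

  intro i
  induction i with
  | zero => intro j h1; omega
  | succ i ih =>
    intro j h1 hin hj1 hj2
    rcases Nat.lt_or_ge i 1 with h2 | h2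
    · -- base case i+1 = 1
      have hi : i = 0 := by omega
      subst hi
      obtain ⟨hL, hU⟩ := hbase j (by omega) (by omega)
      rw [hL, hU]
      exact ⟨le_refl _, le_refl _⟩
    · have h2' : 2 ≤ i + 1 := by omega
      have step : ∀ j', max 1 (i + 1 - W) ≤ j' → j' ≤ min n (i + 1 + W - 1) →
          L (i+1) j' ≤ dist (q (i+1)) (c j') ∧ dist (q (i+1)) (c j') ≤ U (i+1) j' := by
        intro j' hj1' hj2'
        obtain ⟨hL, hU⟩ := hind (i+1) j' h2' hin hj1' hj2'
        have e : i + 1 - 1 = i := by omega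
        rw [e] at hL hU
        have ihj := ih j' (by omega) (by omega) (by omega) (by omega)
        have t1 : dist (q i) (c j') ≤ dist (q i) (q (i+1)) + dist (q (i+1)) (c j') :=
          dist_triangle _ _ _
        have t2 : dist (q i) (q (i+1)) ≤ dist (q i) (c j') + dist (c j') (q (i+1)) :=
          dist_triangle _ _ _
        have t3 : dist (q (i+1)) (c j') ≤ dist (q (i+1)) (q i) + dist (q i) (c j') :=
          dist_triangle _ _ _
        have e1 : dist (c j') (q (i+1)) = dist (q (i+1)) (c j') := dist_comm _ _
        have e2 : dist (q (i+1)) (q i) = dist (q i) (q (i+1)) := dist_comm _ _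
        rw [e1] at t2
        rw [e2] at t3
        constructor
        · rw [hL]
          apply max_le <;> linarith [ihj.1, ihj.2]
        · rw [hU]; linarith [ihj.2]
      rcases Nat.lt_or_ge j (i + 1 + W) with hj | hj
      · exact step j hj1 (by omega)
      · have hje : j = i + 1 + W := by omega
        have hlen : i + 1 + W ≤ n := by omega
        subst hje
        obtain ⟨hL, hU⟩ := htop (i+1) h2' hin hlen
        have e : i + 1 + W - 1 = i + W := by omega
        rw [e] at hL hU
        have prev := step (i + W) (by omega) (by omega)
        have t1 : dist (q (i+1)) (c (i+W)) ≤
            dist (q (i+1)) (c (i+1+W)) + dist (c (i+1+W)) (c (i+W)) := dist_triangle _ _ _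
        have t2 : dist (c (i+W)) (c (i+1+W)) ≤
            dist (c (i+W)) (q (i+1)) + dist (q (i+1)) (c (i+1+W)) := dist_triangle _ _ _
        have t3 : dist (q (i+1)) (c (i+1+W)) ≤
            dist (q (i+1)) (c (i+W)) + dist (c (i+W)) (c (i+1+W)) := dist_triangle _ _ _
        have e1 : dist (c (i+1+W)) (c (i+W)) = dist (c (i+W)) (c (i+1+W)) := dist_comm _ _
        have e2 : dist (c (i+W)) (q (i+1)) = dist (q (i+1)) (c (i+W)) := dist_comm _ _
        rw [e1] at t1
        rw [e2] at t2
        constructor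
        · rw [hL]
          apply max_le <;> linarith [prev.1, prev.2]
        · rw [hU]; linarith [prev.2]
end

section
/- Let Q = (q_1,…,q_n) and C = (c_1,…,c_n) be sequences in a metric space (X,d), and let W ≥ 0 be an integer. Then Σ_{i=1}^n min{ d(q_i, c_j) : 1 ≤ j ≤ n, |i − j| ≤ W } ≤ DTW_W(Q,C). -/
/-- A window-`W` warping path for two series of length `n`: a sequence of index pairs
`p 1, …, p K` starting at `(1,1)`, ending at `(n,n)`, where each step moves right, up,
or diagonally up-right, and every visited pair `(i,j)` satisfies `|i - j| ≤ W`. -/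
def IsWarpPath (n W K : ℕ) (p : ℕ → ℕ × ℕ) : Prop :=
  1 ≤ K ∧ p 1 = (1, 1) ∧ p K = (n, n) ∧
  (∀ k, 1 ≤ k → k < K →
    p (k + 1) = ((p k).1 + 1, (p k).2) ∨
    p (k + 1) = ((p k).1, (p k).2 + 1) ∨
    p (k + 1) = ((p k).1 + 1, (p k).2 + 1)) ∧
  (∀ k, 1 ≤ k → k ≤ K → |((p k).1 : ℤ) - ((p k).2 : ℤ)| ≤ (W : ℤ))

/-- LB_AD is a lower bound of the window-`W` DTW distance: the sum over all query points
`q i` of the minimum distance from `q i` to the candidate points within its window is at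
most the cost of every window-`W` warping path (hence at most `DTW_W(Q,C)`, the minimum
of the costs over all such paths). -/
theorem lb_ad_le_dtw {X : Type*} [MetricSpace X] (n W : ℕ) (hn : 1 ≤ n)
    (q c : ℕ → X) (K : ℕ) (p : ℕ → ℕ × ℕ) (hp : IsWarpPath n W K p) :
    ∑ i ∈ Finset.Icc 1 n,
        sInf {x : ℝ | ∃ j, 1 ≤ j ∧ j ≤ n ∧ |(i : ℤ) - (j : ℤ)| ≤ (W : ℤ) ∧
          x = dist (q i) (c j)} ≤
      ∑ k ∈ Finset.Icc 1 K, dist (q (p k).1) (c (p k).2) := by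
  obtain ⟨hK, h1, hKend, hstep, hwin⟩ := hp
  -- second coordinate is monotone along the path
  have mono2 : ∀ k1, 1 ≤ k1 → ∀ k2, k1 ≤ k2 → k2 ≤ K → (p k1).2 ≤ (p k2).2 := by
    intro k1 hk1 k2 hle hk2
    induction k2, hle using Nat.le_induction with
    | base => exact le_rfl
    | succ m hm ih =>
      have h := hstep m (hk1.trans hm) (by omega)
      have ih' := ih (by omega)
      rcases h with h | h | h <;> rw [h] <;> simp <;> omega
  have bnd2 : ∀ k, 1 ≤ k → k ≤ K → 1 ≤ (p k).2 ∧ (p k).2 ≤ n := by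
    intro k hk1 hkK
    have a := mono2 1 le_rfl k hk1 hkK
    have b := mono2 k hk1 K hkK le_rfl
    rw [h1] at a; rw [hKend] at b
    exact ⟨a, b⟩
  -- every query index is hit by the first coordinate
  have surj : ∀ i, 1 ≤ i → i ≤ n → ∃ k, 1 ≤ k ∧ k ≤ K ∧ (p k).1 = i := by
    have key : ∀ k, 1 ≤ k → k ≤ K → ∀ i, 1 ≤ i → i ≤ (p k).1 →
        ∃ m, 1 ≤ m ∧ m ≤ k ∧ (p m).1 = i := by
      intro k hk
      induction k, hk using Nat.le_induction with
      | base =>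
        intro _ i hi1 hle
        rw [h1] at hle
        exact ⟨1, le_rfl, le_rfl, by rw [h1]; simpa using by omega⟩
      | succ m hm ih =>
        intro hmK i hi1 hle
        have hstep' := hstep m hm (by omega)
        by_cases hc : i ≤ (p m).1
        · obtain ⟨m', h1', h2', h3'⟩ := ih (by omega) i hi1 hc
          exact ⟨m', h1', by omega, h3'⟩
        · refine ⟨m + 1, by omega, le_rfl, ?_⟩
          rcases hstep' with h | h | h <;> rw [h] at hle ⊢ <;> simp at hle ⊢ <;> omega
    intro i hi1 hin
    obtain ⟨m, h1', h2', h3'⟩ := key K hK le_rfl i hi1 (by rw [hKend]; exact hin)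
    exact ⟨m, h1', h2', h3'⟩
  have surj2 : ∀ i, ∃ k, (1 ≤ i ∧ i ≤ n) → (1 ≤ k ∧ k ≤ K ∧ (p k).1 = i) := by
    intro i
    by_cases h : 1 ≤ i ∧ i ≤ n
    · obtain ⟨k, hk⟩ := surj i h.1 h.2
      exact ⟨k, fun _ => hk⟩
    · exact ⟨1, fun hh => absurd hh h⟩
  choose f hf using surj2
  have step1 : ∑ i ∈ Finset.Icc 1 n,
      sInf {x : ℝ | ∃ j, 1 ≤ j ∧ j ≤ n ∧ |(i : ℤ) - (j : ℤ)| ≤ (W : ℤ) ∧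
        x = dist (q i) (c j)} ≤
      ∑ i ∈ Finset.Icc 1 n, dist (q (p (f i)).1) (c (p (f i)).2) := by
    apply Finset.sum_le_sum
    intro i hi
    rw [Finset.mem_Icc] at hi
    obtain ⟨hk1, hkK, hki⟩ := hf i hi
    obtain ⟨hj1, hjn⟩ := bnd2 (f i) hk1 hkK
    have hw := hwin (f i) hk1 hkK
    rw [hki] at hw
    apply csInf_le
    · refine ⟨0, ?_⟩
      rintro x ⟨j, _, _, _, rfl⟩
      exact dist_nonneg
    · exact ⟨(p (f i)).2, hj1, hjn, hw, by rw [hki]⟩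
  refine step1.trans ?_
  have hinj : Set.InjOn f (Finset.Icc 1 n) := by
    intro a ha b hb hab
    rw [Finset.coe_Icc, Set.mem_Icc] at ha hb
    have h1' := (hf a ha).2.2
    have h2' := (hf b hb).2.2
    rw [hab] at h1'
    omega
  have himg : ∑ i ∈ Finset.Icc 1 n, dist (q (p (f i)).1) (c (p (f i)).2)
      = ∑ k ∈ (Finset.Icc 1 n).image f, dist (q (p k).1) (c (p k).2) :=
    (Finset.sum_image (g := f) (f := fun k => dist (q (p k).1) (c (p k).2)) (fun a ha b hb h =>
      hinj (Finset.mem_coe.mpr ha) (Finset.mem_coe.mpr hb) h)).symm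
  rw [himg]
  apply Finset.sum_le_sum_of_subset_of_nonneg
  · intro k hk
    rw [Finset.mem_image] at hk
    obtain ⟨i, hi, rfl⟩ := hk
    rw [Finset.mem_Icc] at hi ⊢
    exact ⟨(hf i hi).1, (hf i hi).2.1⟩
  · intro _ _ _
    exact dist_nonneg
end

section
/- Let Q = (q_1,…,q_n) and C = (c_1,…,c_n) be sequences in a metric space (X,d), let W ≥ 0 be an integer, and let ℓ : {1,…,n} → ℝ be any function such that ℓ(j) ≤ d(q_i, c_j) for every pair (i,j) with |i − j| ≤ W. Then Σ_{j=1}^n ℓ(j) ≤ DTW_W(Q,C). -/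
/-- General soundness of per-point lower-bound filters: if `ℓ j ≤ d(q i, c j)` for every
pair `(i, j)` inside the window (`|i - j| ≤ W`), then `∑ j, ℓ j` is at most the cost of
every window-`W` warping path, hence at most `DTW_W(Q,C)`. -/
theorem per_point_lb_le_dtw {X : Type*} [MetricSpace X] (n W : ℕ) (hn : 1 ≤ n)
    (q c : ℕ → X) (ℓ : ℕ → ℝ)
    (hℓ : ∀ i j, 1 ≤ i → i ≤ n → 1 ≤ j → j ≤ n → |(i : ℤ) - (j : ℤ)| ≤ (W : ℤ) →
      ℓ j ≤ dist (q i) (c j))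
    (K : ℕ) (p : ℕ → ℕ × ℕ) (hp : IsWarpPath n W K p) :
    ∑ j ∈ Finset.Icc 1 n, ℓ j ≤ ∑ k ∈ Finset.Icc 1 K, dist (q (p k).1) (c (p k).2) := by
  obtain ⟨hK, hp1, hpK, hstep, hwin⟩ := hp
  -- step bounds
  have hstep2 : ∀ k, 1 ≤ k → k < K →
      (p k).1 ≤ (p (k+1)).1 ∧ (p (k+1)).1 ≤ (p k).1 + 1 ∧
      (p k).2 ≤ (p (k+1)).2 ∧ (p (k+1)).2 ≤ (p k).2 + 1 := by
    intro k hk1 hkK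
    rcases hstep k hk1 hkK with h | h | h <;> rw [h] <;> simp <;> omega
  -- monotonicity of both coordinates
  have hmono : ∀ k₂, k₂ ≤ K → ∀ k₁, 1 ≤ k₁ → k₁ ≤ k₂ →
      (p k₁).1 ≤ (p k₂).1 ∧ (p k₁).2 ≤ (p k₂).2 := by
    intro k₂
    induction k₂ with
    | zero => intro _ k₁ h1 h2; omega
    | succ m ih =>
      intro hmK k₁ h1 h2
      rcases Nat.lt_or_ge k₁ (m+1) with hlt | hge
      · have hm1 : 1 ≤ m := by omega
        have h := ih (by omega) k₁ h1 (by omega)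
        have h2 := hstep2 m hm1 (by omega)
        exact ⟨le_trans h.1 h2.1, le_trans h.2 h2.2.2.1⟩
      · have : k₁ = m + 1 := by omega
        subst this; exact ⟨le_refl _, le_refl _⟩
  -- discrete intermediate value theorem for the second coordinate
  have hivt : ∀ k, 1 ≤ k → k ≤ K → ∀ j, 1 ≤ j → j ≤ (p k).2 →
      ∃ m, 1 ≤ m ∧ m ≤ k ∧ (p m).2 = j := by
    intro k
    induction k with
    | zero => omega
    | succ t ih =>
      intro hk1 hkK j hj1 hj2
      rcases Nat.eq_or_lt_of_le hk1 with heq | hlt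
      · refine ⟨1, le_refl _, by omega, ?_⟩
        have h1' : (p 1).2 = 1 := by rw [hp1]
        rw [← heq] at hj2
        omega
      · have ht1 : 1 ≤ t := by omega
        have hstep' := hstep2 t ht1 (by omega)
        rcases Nat.lt_or_ge (p t).2 j with hcase | hcase
        · have : (p (t+1)).2 = j := by omega
          exact ⟨t+1, by omega, le_refl _, this⟩
        · obtain ⟨m, hm1, hm2, hm3⟩ := ih ht1 (by omega) j hj1 hcase
          exact ⟨m, hm1, by omega, hm3⟩
  -- for each j choose a step f j hitting column j
  have hexists : ∀ j ∈ Finset.Icc 1 n, ∃ m, 1 ≤ m ∧ m ≤ K ∧ (p m).2 = j := by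
    intro j hj
    rw [Finset.mem_Icc] at hj
    exact hivt K hK (le_refl _) j hj.1 (by rw [hpK]; exact hj.2)
  choose! f hf1 hf2 hf3 using hexists
  have key : ∀ j ∈ Finset.Icc 1 n, ℓ j ≤ dist (q (p (f j)).1) (c (p (f j)).2) := by
    intro j hj
    have hj' := Finset.mem_Icc.mp hj
    have e2 : (p (f j)).2 = j := hf3 j hj
    have hb := hmono (f j) (hf2 j hj) 1 (le_refl _) (hf1 j hj)
    have hb' := hmono K (le_refl _) (f j) (hf1 j hj) (hf2 j hj)
    rw [hp1] at hb; rw [hpK] at hb'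
    have hw := hwin (f j) (hf1 j hj) (hf2 j hj)
    rw [e2] at hw
    rw [e2]
    exact hℓ (p (f j)).1 j hb.1 hb'.1 hj'.1 hj'.2 hw
  calc ∑ j ∈ Finset.Icc 1 n, ℓ j
      ≤ ∑ j ∈ Finset.Icc 1 n, dist (q (p (f j)).1) (c (p (f j)).2) :=
        Finset.sum_le_sum key
    _ = ∑ k ∈ (Finset.Icc 1 n).image f, dist (q (p k).1) (c (p k).2) := by
        rw [Finset.sum_image]
        intro x hx y hy hxy
        have := hf3 x hx
        have := hf3 y hy
        rw [← hf3 x hx, ← hf3 y hy, hxy]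
    _ ≤ ∑ k ∈ Finset.Icc 1 K, dist (q (p k).1) (c (p k).2) := by
        apply Finset.sum_le_sum_of_subset_of_nonneg
        · intro k hk
          obtain ⟨j, hj, rfl⟩ := Finset.mem_image.mp hk
          exact Finset.mem_Icc.mpr ⟨hf1 j hj, hf2 j hj⟩
        · intro k _ _; exact dist_nonneg
end

section
/- Let (X,d) be a metric space, W ≥ 1 an integer, and Q = (q_1,…,q_n), C = (c_1,…,c_n) sequences in X, and let L(i,j) be the lower bounds produced by the LB_TI recursion. Then Σ_{j=1}^n min{ L(i,j) : 1 ≤ i ≤ n, |i − j| ≤ W } ≤ DTW_W(Q,C). -/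
/-- Soundness of the LB_TI lower bound: if `L` and `U` satisfy the LB_TI recursion, then
the sum over all candidate points `c j` of the minimum of `L i j` over the query points
`q i` in the window of `c j` is at most the cost of every window-`W` warping path, hence
at most `DTW_W(Q,C)`. -/
theorem lbti_le_dtw {X : Type*} [MetricSpace X]
    (n W : ℕ) (hW : 1 ≤ W) (hn : 1 ≤ n)
    (q c : ℕ → X) (L U : ℕ → ℕ → ℝ)
    (hbase : ∀ j, 1 ≤ j → j ≤ min n (1 + W) →
      L 1 j = dist (q 1) (c j) ∧ U 1 j = dist (q 1) (c j))
    (hind : ∀ i j, 2 ≤ i → i ≤ n → max 1 (i - W) ≤ j → j ≤ min n (i + W - 1) →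
      L i j = max (L (i - 1) j - dist (q (i - 1)) (q i))
                  (dist (q (i - 1)) (q i) - U (i - 1) j) ∧
      U i j = U (i - 1) j + dist (q (i - 1)) (q i))
    (htop : ∀ i, 2 ≤ i → i ≤ n → i + W ≤ n →
      L i (i + W) = max (L i (i + W - 1) - dist (c (i + W - 1)) (c (i + W)))
                        (dist (c (i + W - 1)) (c (i + W)) - U i (i + W - 1)) ∧
      U i (i + W) = U i (i + W - 1) + dist (c (i + W - 1)) (c (i + W)))
    (K : ℕ) (p : ℕ → ℕ × ℕ) (hp : IsWarpPath n W K p) :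
    ∑ j ∈ Finset.Icc 1 n,
        sInf {x : ℝ | ∃ i, 1 ≤ i ∧ i ≤ n ∧ |(i : ℤ) - (j : ℤ)| ≤ (W : ℤ) ∧ x = L i j} ≤
      ∑ k ∈ Finset.Icc 1 K, dist (q (p k).1) (c (p k).2) := by
  obtain ⟨hK, hp1, hpK, hstep, hwin⟩ := hp
  -- Sandwich lemma: L i j ≤ dist (q i) (c j) ≤ U i j on the window
  have sandwich : ∀ i, 1 ≤ i → i ≤ n → ∀ j, max 1 (i - W) ≤ j → j ≤ min n (i + W) →
      L i j ≤ dist (q i) (c j) ∧ dist (q i) (c j) ≤ U i j := by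
    intro i hi1
    induction i, hi1 using Nat.le_induction with
    | base =>
      intro _ j hj1 hj2
      obtain ⟨hL, hU⟩ := hbase j (by omega) (by omega)
      exact ⟨hL.le, hU.ge⟩
    | succ i hi ih =>
      intro hin
      have hint : ∀ j, max 1 (i + 1 - W) ≤ j → j ≤ min n (i + W) →
          L (i+1) j ≤ dist (q (i+1)) (c j) ∧ dist (q (i+1)) (c j) ≤ U (i+1) j := by
        intro j hj1 hj2
        obtain ⟨hL, hU⟩ := hind (i+1) j (by omega) hin (by omega) (by omega)
        simp only [Nat.add_sub_cancel] at hL hU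
        obtain ⟨ihL, ihU⟩ := ih (by omega) j (by omega) (by omega)
        have t1 := dist_triangle (q i) (q (i+1)) (c j)
        have t2 := dist_triangle (q i) (c j) (q (i+1))
        have t3 := dist_triangle (q (i+1)) (q i) (c j)
        have c1 : dist (q (i+1)) (q i) = dist (q i) (q (i+1)) := dist_comm _ _
        have c2 : dist (c j) (q (i+1)) = dist (q (i+1)) (c j) := dist_comm _ _
        refine ⟨?_, ?_⟩
        · rw [hL]
          apply max_le <;> linarith
        · rw [hU]; linarith
      intro j hj1 hj2
      by_cases hcase : j ≤ i + W
      · exact hint j hj1 (by omega)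
      · have hje : j = i + 1 + W := by omega
        subst hje
        have hjn : i + 1 + W ≤ n := by omega
        obtain ⟨hL, hU⟩ := htop (i+1) (by omega) hin hjn
        have e : i + 1 + W - 1 = i + W := by omega
        rw [e] at hL hU
        obtain ⟨ihL, ihU⟩ := hint (i + W) (by omega) (by omega)
        have t1 := dist_triangle (q (i+1)) (c (i+1+W)) (c (i+W))
        have t2 := dist_triangle (c (i+W)) (q (i+1)) (c (i+1+W))
        have t3 := dist_triangle (q (i+1)) (c (i+W)) (c (i+1+W))
        have c1 : dist (c (i+1+W)) (c (i+W)) = dist (c (i+W)) (c (i+1+W)) := dist_comm _ _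
        have c2 : dist (c (i+W)) (q (i+1)) = dist (q (i+1)) (c (i+W)) := dist_comm _ _
        refine ⟨?_, ?_⟩
        · rw [hL]
          apply max_le <;> linarith
        · rw [hU]; linarith
  -- Path monotonicity
  have mono : ∀ b, 1 ≤ b → b ≤ K → ∀ a, 1 ≤ a → a ≤ b →
      (p a).1 ≤ (p b).1 ∧ (p a).2 ≤ (p b).2 := by
    intro b
    induction b with
    | zero => omega
    | succ b ih =>
      intro hb1 hbK a ha1 hab
      rcases eq_or_lt_of_le hab with h | h
      · subst h; exact ⟨le_refl _, le_refl _⟩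
      · have hb : 1 ≤ b := by omega
        have hab' := ih hb (by omega) a ha1 (by omega)
        have step := hstep b hb (by omega)
        rcases step with h | h | h <;> rw [h] <;>
          exact ⟨by simp; omega, by simp; omega⟩
  have bounds : ∀ k, 1 ≤ k → k ≤ K →
      1 ≤ (p k).1 ∧ (p k).1 ≤ n ∧ 1 ≤ (p k).2 ∧ (p k).2 ≤ n := by
    intro k hk1 hkK
    have h1 := mono k hk1 hkK 1 le_rfl hk1
    have h2 := mono K (by omega) le_rfl k hk1 hkK
    rw [hp1] at h1
    rw [hpK] at h2
    simp at h1 h2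
    omega
  -- Discrete IVT for the second coordinate
  have ivt : ∀ j, ∃ k, 1 ≤ j → j ≤ n → 1 ≤ k ∧ k ≤ K ∧ (p k).2 = j := by
    intro j
    by_cases hj : 1 ≤ j ∧ j ≤ n
    · have hex : ∃ k, 1 ≤ k ∧ k ≤ K ∧ j ≤ (p k).2 := by
        refine ⟨K, hK, le_rfl, ?_⟩
        rw [hpK]; exact hj.2
      obtain ⟨hk01, hk0K, hk0j⟩ := Nat.find_spec hex
      refine ⟨Nat.find hex, fun _ _ => ⟨hk01, hk0K, ?_⟩⟩
      by_cases h1 : Nat.find hex = 1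
      · rw [h1] at hk0j ⊢
        rw [hp1] at hk0j ⊢
        simp at hk0j ⊢
        omega
      · have hmin := Nat.find_min hex (show Nat.find hex - 1 < Nat.find hex by omega)
        push_neg at hmin
        have hlt : (p (Nat.find hex - 1)).2 < j := hmin (by omega) (by omega)
        have step := hstep (Nat.find hex - 1) (by omega) (by omega)
        have e : Nat.find hex - 1 + 1 = Nat.find hex := by omega
        rw [e] at step
        rcases step with h | h | h <;> rw [h] at hk0j ⊢ <;> simp at hk0j ⊢ <;> omega
    · exact ⟨1, fun h1 h2 => absurd ⟨h1, h2⟩ hj⟩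
  choose f hf using ivt
  have hfmem : ∀ j ∈ Finset.Icc 1 n, f j ∈ Finset.Icc 1 K := by
    intro j hj
    rw [Finset.mem_Icc] at hj ⊢
    obtain ⟨h1, h2, _⟩ := hf j hj.1 hj.2
    exact ⟨h1, h2⟩
  have hfsnd : ∀ j ∈ Finset.Icc 1 n, (p (f j)).2 = j := by
    intro j hj
    rw [Finset.mem_Icc] at hj
    exact (hf j hj.1 hj.2).2.2
  have hinj : ∀ x ∈ Finset.Icc 1 n, ∀ y ∈ Finset.Icc 1 n, f x = f y → x = y := by
    intro x hx y hy hxy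
    have := hfsnd x hx
    have := hfsnd y hy
    rw [← hfsnd x hx, ← hfsnd y hy, hxy]
  calc ∑ j ∈ Finset.Icc 1 n,
        sInf {x : ℝ | ∃ i, 1 ≤ i ∧ i ≤ n ∧ |(i : ℤ) - (j : ℤ)| ≤ (W : ℤ) ∧ x = L i j}
      ≤ ∑ j ∈ Finset.Icc 1 n, dist (q (p (f j)).1) (c (p (f j)).2) := by
        apply Finset.sum_le_sum
        intro j hj
        rw [Finset.mem_Icc] at hj
        set k := f j with hk
        have hsnd : (p k).2 = j := hfsnd j (by rw [Finset.mem_Icc]; exact hj)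
        obtain ⟨hk1, hkK, _⟩ := hf j hj.1 hj.2
        obtain ⟨hi1, hin, _, _⟩ := bounds k hk1 hkK
        have hw := hwin k hk1 hkK
        rw [hsnd] at hw
        have habs : ((p k).1 : ℤ) - (j : ℤ) ≤ W ∧ (j : ℤ) - ((p k).1 : ℤ) ≤ W := by
          rw [abs_le] at hw; omega
        have hbdd : BddBelow {x : ℝ | ∃ i, 1 ≤ i ∧ i ≤ n ∧ |(i : ℤ) - (j : ℤ)| ≤ (W : ℤ) ∧ x = L i j} := by
          apply Set.Finite.bddBelow
          apply Set.Finite.subset (Finset.finite_toSet ((Finset.Icc 1 n).image (fun i => L i j)))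
          rintro x ⟨i, h1, h2, _, rfl⟩
          simp only [Finset.coe_image, Set.mem_image, Finset.mem_coe, Finset.mem_Icc]
          exact ⟨i, ⟨h1, h2⟩, rfl⟩
        have hmem : L (p k).1 j ∈ {x : ℝ | ∃ i, 1 ≤ i ∧ i ≤ n ∧ |(i : ℤ) - (j : ℤ)| ≤ (W : ℤ) ∧ x = L i j} :=
          ⟨(p k).1, hi1, hin, hw, rfl⟩
        have hle := csInf_le hbdd hmem
        have hsand := (sandwich (p k).1 hi1 hin j (by omega) (by omega)).1
        rw [hsnd]
        linarith
    _ = ∑ k ∈ (Finset.Icc 1 n).image f, dist (q (p k).1) (c (p k).2) :=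
        (Finset.sum_image (f := fun k => dist (q (p k).1) (c (p k).2)) hinj).symm
    _ ≤ ∑ k ∈ Finset.Icc 1 K, dist (q (p k).1) (c (p k).2) := by
        apply Finset.sum_le_sum_of_subset_of_nonneg
        · intro k hk
          obtain ⟨j, hj, rfl⟩ := Finset.mem_image.mp hk
          exact hfmem j hj
        · intro _ _ _; exact dist_nonneg
end

section
/- Let S_1,…,S_K be finite nonempty subsets of ℝ^D, let S = S_1 ∪ … ∪ S_K, and let c ∈ ℝ^D. Then bd(c, S) ≤ min_{1 ≤ k ≤ K} bd(c, S_k) ≤ min_{s ∈ S} ‖c − s‖. -/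
/-- The box distance `bd(c, S)`: the Euclidean distance from the point `c` to the
axis-aligned bounding box of the set `S ⊆ ℝ^D`. -/
noncomputable def boxDist {D : ℕ} (c : EuclideanSpace ℝ (Fin D))
    (S : Set (EuclideanSpace ℝ (Fin D))) : ℝ :=
  Real.sqrt (∑ p : Fin D,
    max (c p - sSup ((fun s => s p) '' S)) (max (sInf ((fun s => s p) '' S) - c p) 0) ^ 2)

lemma boxDist_nonneg {D : ℕ} (c : EuclideanSpace ℝ (Fin D))
    (S : Set (EuclideanSpace ℝ (Fin D))) : 0 ≤ boxDist c S := Real.sqrt_nonneg _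

lemma term_nonneg (a b : ℝ) : 0 ≤ max a (max b 0) :=
  le_trans (le_max_right b 0) (le_max_right a _)

lemma boxDist_mono {D : ℕ} (c : EuclideanSpace ℝ (Fin D))
    {S T : Set (EuclideanSpace ℝ (Fin D))} (hST : S ⊆ T) (hS : S.Nonempty)
    (hT : T.Finite) : boxDist c T ≤ boxDist c S := by
  apply Real.sqrt_le_sqrt
  apply Finset.sum_le_sum
  intro p _
  have hne : ((fun s => s p) '' S).Nonempty := hS.image _
  have hsup : sSup ((fun s => s p) '' S) ≤ sSup ((fun s => s p) '' T) :=
    csSup_le_csSup (hT.image _).bddAbove hne (Set.image_mono hST)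
  have hinf : sInf ((fun s => s p) '' T) ≤ sInf ((fun s => s p) '' S) :=
    csInf_le_csInf (hT.image _).bddBelow hne (Set.image_mono hST)
  have h1 : max (c p - sSup ((fun s => s p) '' T)) (max (sInf ((fun s => s p) '' T) - c p) 0)
      ≤ max (c p - sSup ((fun s => s p) '' S)) (max (sInf ((fun s => s p) '' S) - c p) 0) := by
    apply max_le_max (by linarith) (max_le_max (by linarith) le_rfl)
  exact pow_le_pow_left₀ (term_nonneg _ _) h1 2

lemma boxDist_le_dist {D : ℕ} (c : EuclideanSpace ℝ (Fin D))
    {S : Set (EuclideanSpace ℝ (Fin D))} (hS : S.Finite)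
    {s : EuclideanSpace ℝ (Fin D)} (hs : s ∈ S) : boxDist c S ≤ ‖c - s‖ := by
  rw [EuclideanSpace.norm_eq, boxDist]
  apply Real.sqrt_le_sqrt
  apply Finset.sum_le_sum
  intro p _
  have hmem : s p ∈ (fun s => s p) '' S := ⟨s, hs, rfl⟩
  have h1 : s p ≤ sSup ((fun s => s p) '' S) := le_csSup (hS.image _).bddAbove hmem
  have h2 : sInf ((fun s => s p) '' S) ≤ s p := csInf_le (hS.image _).bddBelow hmem
  have hcs : (c - s) p = c p - s p := rfl
  rw [hcs, Real.norm_eq_abs]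
  have h3 : max (c p - sSup ((fun t => t p) '' S)) (max (sInf ((fun t => t p) '' S) - c p) 0)
      ≤ |c p - s p| := by
    apply max_le
    · calc c p - sSup ((fun t => t p) '' S) ≤ c p - s p := by linarith
        _ ≤ |c p - s p| := le_abs_self _
    · apply max_le
      · calc sInf ((fun t => t p) '' S) - c p ≤ s p - c p := by linarith
          _ = -(c p - s p) := by ring
          _ ≤ |c p - s p| := neg_le_abs _
      · exact abs_nonneg _
  exact pow_le_pow_left₀ (term_nonneg _ _) h3 2

/-- Key insight of LB_PC: for finite nonempty sets `S_1, …, S_K ⊆ ℝ^D` with union `S`,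
the single-box bound `bd(c, S)` is at most the minimum over the clusters of the box
distances `bd(c, S_k)`, which in turn is at most the true minimum point distance
`min_{s ∈ S} ‖c - s‖`. -/
theorem boxDist_union_le_min_boxDist_le_min_dist {D K : ℕ} (hK : 1 ≤ K)
    (S : Fin K → Set (EuclideanSpace ℝ (Fin D)))
    (hfin : ∀ k, (S k).Finite) (hne : ∀ k, (S k).Nonempty)
    (c : EuclideanSpace ℝ (Fin D)) :
    boxDist c (⋃ k, S k) ≤ sInf {x : ℝ | ∃ k, x = boxDist c (S k)} ∧
    sInf {x : ℝ | ∃ k, x = boxDist c (S k)} ≤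
      sInf {x : ℝ | ∃ s ∈ ⋃ k, S k, x = ‖c - s‖} := by
  have k0 : Fin K := ⟨0, hK⟩
  have hUfin : (⋃ k, S k).Finite := Set.finite_iUnion hfin
  have hbdd : BddBelow {x : ℝ | ∃ k, x = boxDist c (S k)} :=
    ⟨0, fun x ⟨k, hk⟩ => hk ▸ boxDist_nonneg c (S k)⟩
  have hsetne : {x : ℝ | ∃ k, x = boxDist c (S k)}.Nonempty := ⟨boxDist c (S k0), k0, rfl⟩
  constructor
  · apply le_csInf hsetne
    rintro x ⟨k, rfl⟩
    exact boxDist_mono c (Set.subset_iUnion S k) (hne k) hUfin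
  · apply le_csInf
    · obtain ⟨s, hs⟩ := hne k0
      exact ⟨‖c - s‖, s, Set.mem_iUnion.2 ⟨k0, hs⟩, rfl⟩
    · rintro x ⟨s, hs, rfl⟩
      obtain ⟨k, hk⟩ := Set.mem_iUnion.1 hs
      exact le_trans (csInf_le hbdd ⟨k, rfl⟩) (boxDist_le_dist c (hfin k) hk)
end

section
/- Let Q = (q_1,…,q_n) and C = (c_1,…,c_n) be sequences in ℝ^D, and let W ≥ 0 be an integer. For each j define the envelope u_{j,p} = max{ q_{i,p} : |i−j| ≤ W, 1 ≤ i ≤ n } and l_{j,p} = min{ q_{i,p} : |i−j| ≤ W, 1 ≤ i ≤ n }, and the penalty pen(j,p) = max(c_{j,p} − u_{j,p}, l_{j,p} − c_{j,p}, 0). Then Σ_{j=1}^n Σ_{p=1}^D pen(j,p)² ≤ DTW²_W(Q,C); equivalently, LB_MV(Q,C) = sqrt(Σ_{j=1}^n Σ_{p=1}^D pen(j,p)²) ≤ sqrt(DTW²_W(Q,C)). -/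
/-- The LB_MV per-point per-dimension penalty: `pen(j,p) = max (c_{j,p} - u_{j,p})
(max (l_{j,p} - c_{j,p}) 0)`, where `u_{j,p}` and `l_{j,p}` are the max and min of the
`p`-th coordinates of the query points `q i` with `1 ≤ i ≤ n` and `|i - j| ≤ W`. -/
noncomputable def lbmvPen {D : ℕ} (n W : ℕ) (q c : ℕ → EuclideanSpace ℝ (Fin D))
    (j : ℕ) (p : Fin D) : ℝ :=
  max (c j p -
        sSup ((fun i => q i p) '' {i : ℕ | 1 ≤ i ∧ i ≤ n ∧ |(i : ℤ) - (j : ℤ)| ≤ (W : ℤ)}))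
      (max (sInf ((fun i => q i p) ''
              {i : ℕ | 1 ≤ i ∧ i ≤ n ∧ |(i : ℤ) - (j : ℤ)| ≤ (W : ℤ)}) - c j p) 0)

/-- Soundness of LB_MV (Rath–Manmatha): the sum of the squared envelope penalties is at
most the squared cost of every window-`W` warping path, hence at most `DTW²_W(Q,C)`;
equivalently, `LB_MV(Q,C) ≤ sqrt (DTW²_W(Q,C))`. -/
theorem lbmv_le_dtw {D : ℕ} (n W : ℕ) (hn : 1 ≤ n)
    (q c : ℕ → EuclideanSpace ℝ (Fin D))
    (K : ℕ) (π : ℕ → ℕ × ℕ) (hπ : IsWarpPath n W K π) :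
    (∑ j ∈ Finset.Icc 1 n, ∑ p : Fin D, lbmvPen n W q c j p ^ 2 ≤
        ∑ k ∈ Finset.Icc 1 K, ‖q (π k).1 - c (π k).2‖ ^ 2) ∧
    Real.sqrt (∑ j ∈ Finset.Icc 1 n, ∑ p : Fin D, lbmvPen n W q c j p ^ 2) ≤
      Real.sqrt (∑ k ∈ Finset.Icc 1 K, ‖q (π k).1 - c (π k).2‖ ^ 2) := by
  obtain ⟨hK, hstart, hend, hstep, hwin⟩ := hπ
  -- monotonicity of both coordinates
  have mono : ∀ k', k' ≤ K → ∀ k, 1 ≤ k → k ≤ k' →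
      (π k).1 ≤ (π k').1 ∧ (π k).2 ≤ (π k').2 := by
    intro k'
    induction k' with
    | zero => intro _ k hk hkk; omega
    | succ m ih =>
      intro hmK k hk hkk
      rcases Nat.lt_or_ge k (m + 1) with h | h
      · have hm : (π k).1 ≤ (π m).1 ∧ (π k).2 ≤ (π m).2 := ih (by omega) k hk (by omega)
        rcases hstep m (by omega) (by omega) with hs | hs | hs <;>
          rw [hs] <;> constructor <;> simp <;> omega
      · have : k = m + 1 := by omega
        subst this; exact ⟨le_rfl, le_rfl⟩
  have bound1 : ∀ k, 1 ≤ k → k ≤ K → 1 ≤ (π k).1 ∧ (π k).1 ≤ n := by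
    intro k hk hkK
    have h1 := (mono k hkK 1 le_rfl hk).1
    have h2 := (mono K le_rfl k hk hkK).1
    rw [hstart] at h1; rw [hend] at h2
    exact ⟨h1, h2⟩
  -- discrete intermediate value for the second coordinate
  have ivt : ∀ j, 1 ≤ j → j ≤ n → ∃ k, 1 ≤ k ∧ k ≤ K ∧ (π k).2 = j := by
    intro j hj hjn
    have main : ∀ k, 1 ≤ k → k ≤ K → j ≤ (π k).2 →
        ∃ k', 1 ≤ k' ∧ k' ≤ k ∧ (π k').2 = j := by
      intro k
      induction k with
      | zero => omega
      | succ m ih =>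
        intro _ hmK hjle
        by_cases hm1 : 1 ≤ m
        · by_cases hle : j ≤ (π m).2
          · obtain ⟨k', hk'⟩ := ih hm1 (by omega) hle
            exact ⟨k', hk'.1, by omega, hk'.2.2⟩
          · refine ⟨m + 1, by omega, le_rfl, ?_⟩
            rcases hstep m hm1 (by omega) with hs | hs | hs <;>
              rw [hs] at hjle ⊢ <;> simp at hjle ⊢ <;> omega
        · have hm0 : m = 0 := by omega
          subst hm0
          refine ⟨1, le_rfl, le_rfl, ?_⟩
          rw [hstart] at hjle ⊢
          simp at hjle ⊢
          omega
    exact main K hK le_rfl (by rw [hend]; exact hjn)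
  -- per-point bound
  have keybound : ∀ j, 1 ≤ j → j ≤ n → ∀ i, 1 ≤ i → i ≤ n →
      |(i : ℤ) - (j : ℤ)| ≤ (W : ℤ) →
      ∑ p : Fin D, lbmvPen n W q c j p ^ 2 ≤ ‖q i - c j‖ ^ 2 := by
    intro j hj hjn i hi hin hiw
    have hnorm : ‖q i - c j‖ ^ 2 = ∑ p : Fin D, (q i p - c j p) ^ 2 := by
      rw [EuclideanSpace.norm_eq, Real.sq_sqrt (Finset.sum_nonneg fun p _ => by positivity)]
      refine Finset.sum_congr rfl fun p _ => ?_
      rw [Real.norm_eq_abs, sq_abs]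
      rfl
    rw [hnorm]
    refine Finset.sum_le_sum fun p _ => ?_
    set S : Set ℕ := {i : ℕ | 1 ≤ i ∧ i ≤ n ∧ |(i : ℤ) - (j : ℤ)| ≤ (W : ℤ)} with hS
    have hiS : i ∈ S := ⟨hi, hin, hiw⟩
    have hfin : ((fun i => q i p) '' S).Finite :=
      Set.Finite.image _ ((Set.finite_Icc 1 n).subset fun x hx => ⟨hx.1, hx.2.1⟩)
    have hmem : q i p ∈ (fun i => q i p) '' S := ⟨i, hiS, rfl⟩
    have hup : q i p ≤ sSup ((fun i => q i p) '' S) :=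
      le_csSup hfin.bddAbove hmem
    have hlo : sInf ((fun i => q i p) '' S) ≤ q i p :=
      csInf_le hfin.bddBelow hmem
    have hpen : lbmvPen n W q c j p ≤ |q i p - c j p| := by
      unfold lbmvPen
      rw [← hS]
      refine max_le ?_ (max_le ?_ (abs_nonneg _))
      · have : c j p - sSup ((fun i => q i p) '' S) ≤ c j p - q i p := by linarith
        calc c j p - sSup ((fun i => q i p) '' S) ≤ c j p - q i p := this
          _ ≤ |q i p - c j p| := by rw [abs_sub_comm]; exact le_abs_self _
      · calc sInf ((fun i => q i p) '' S) - c j p ≤ q i p - c j p := by linarith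
          _ ≤ |q i p - c j p| := le_abs_self _
    have h0 : 0 ≤ lbmvPen n W q c j p := le_max_of_le_right (le_max_right _ _)
    calc lbmvPen n W q c j p ^ 2 ≤ |q i p - c j p| ^ 2 := by
          exact pow_le_pow_left₀ h0 hpen 2
      _ = (q i p - c j p) ^ 2 := sq_abs _
  -- choice function
  classical
  have hf : ∀ j, ∃ k, 1 ≤ j → j ≤ n → 1 ≤ k ∧ k ≤ K ∧ (π k).2 = j := by
    intro j
    by_cases h : 1 ≤ j ∧ j ≤ n
    · obtain ⟨k, hk⟩ := ivt j h.1 h.2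
      exact ⟨k, fun _ _ => hk⟩
    · exact ⟨0, fun h1 h2 => absurd ⟨h1, h2⟩ h⟩
  choose f hfp using hf
  have key : ∑ j ∈ Finset.Icc 1 n, ∑ p : Fin D, lbmvPen n W q c j p ^ 2 ≤
      ∑ k ∈ Finset.Icc 1 K, ‖q (π k).1 - c (π k).2‖ ^ 2 := by
    calc ∑ j ∈ Finset.Icc 1 n, ∑ p : Fin D, lbmvPen n W q c j p ^ 2
        ≤ ∑ j ∈ Finset.Icc 1 n, ‖q (π (f j)).1 - c (π (f j)).2‖ ^ 2 := by
          refine Finset.sum_le_sum fun j hj => ?_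
          rw [Finset.mem_Icc] at hj
          obtain ⟨hk1, hk2, hk3⟩ := hfp j hj.1 hj.2
          rw [hk3]
          have hw := hwin (f j) hk1 hk2
          rw [hk3] at hw
          exact keybound j hj.1 hj.2 (π (f j)).1 (bound1 _ hk1 hk2).1
            (bound1 _ hk1 hk2).2 hw
      _ = ∑ k ∈ (Finset.Icc 1 n).image f, ‖q (π k).1 - c (π k).2‖ ^ 2 := by
          have hinj : ∀ x ∈ Finset.Icc 1 n, ∀ y ∈ Finset.Icc 1 n, f x = f y → x = y := by
            intro x hx y hy hxy
            rw [Finset.mem_Icc] at hx hy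
            have h1 := (hfp x hx.1 hx.2).2.2
            have h2 := (hfp y hy.1 hy.2).2.2
            rw [← h1, ← h2, hxy]
          exact (Finset.sum_image (f := fun k => ‖q (π k).1 - c (π k).2‖ ^ 2) hinj).symm
      _ ≤ ∑ k ∈ Finset.Icc 1 K, ‖q (π k).1 - c (π k).2‖ ^ 2 := by
          refine Finset.sum_le_sum_of_subset_of_nonneg ?_ fun k _ _ => by positivity
          intro k hk
          rw [Finset.mem_image] at hk
          obtain ⟨x, hx, rfl⟩ := hk
          rw [Finset.mem_Icc] at hx ⊢
          exact ⟨(hfp x hx.1 hx.2).1, (hfp x hx.1 hx.2).2.1⟩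
  exact ⟨key, Real.sqrt_le_sqrt key⟩
end

section
/- Let Q = (q_1,…,q_n) and C = (c_1,…,c_n) be sequences in ℝ^D, let W ≥ 0 be an integer, and suppose that for each j ∈ {1,…,n} we are given finitely many finite nonempty sets S_{j,1},…,S_{j,K_j} ⊆ ℝ^D whose union contains { q_i : 1 ≤ i ≤ n, |i − j| ≤ W }. Then Σ_{j=1}^n ( min_{1 ≤ k ≤ K_j} bd(c_j, S_{j,k}) )² ≤ DTW²_W(Q,C). -/
lemma boxDist_le {D : ℕ} (c x : EuclideanSpace ℝ (Fin D))
    (S : Set (EuclideanSpace ℝ (Fin D))) (hS : S.Finite) (hx : x ∈ S) :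
    boxDist c S ≤ ‖x - c‖ := by
  rw [boxDist, EuclideanSpace.norm_eq]
  apply Real.sqrt_le_sqrt
  apply Finset.sum_le_sum
  intro p _
  have h1 : x p ≤ sSup ((fun s => s p) '' S) :=
    le_csSup ((hS.image _).bddAbove) ⟨x, hx, rfl⟩
  have h2 : sInf ((fun s => s p) '' S) ≤ x p :=
    csInf_le ((hS.image _).bddBelow) ⟨x, hx, rfl⟩
  have hsub : (x - c) p = x p - c p := rfl
  rw [hsub, Real.norm_eq_abs]
  have ha := le_abs_self (x p - c p)
  have hb := neg_abs_le (x p - c p)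
  have h0 := abs_nonneg (x p - c p)
  have hm : max (c p - sSup ((fun s => s p) '' S)) (max (sInf ((fun s => s p) '' S) - c p) 0)
      ≤ |x p - c p| :=
    max_le (by linarith) (max_le (by linarith) h0)
  exact pow_le_pow_left₀ (le_max_of_le_right (le_max_right _ _)) hm 2

lemma warp_step {n W K : ℕ} {p : ℕ → ℕ × ℕ} (h : IsWarpPath n W K p)
    {k : ℕ} (h1 : 1 ≤ k) (h2 : k < K) :
    ((p k).1 ≤ (p (k+1)).1 ∧ (p (k+1)).1 ≤ (p k).1 + 1) ∧
    ((p k).2 ≤ (p (k+1)).2 ∧ (p (k+1)).2 ≤ (p k).2 + 1) := by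
  rcases h.2.2.2.1 k h1 h2 with hs | hs | hs <;> rw [hs] <;> simp

lemma warp_mono1 {n W K : ℕ} {p : ℕ → ℕ × ℕ} (h : IsWarpPath n W K p)
    {k k' : ℕ} (h1 : 1 ≤ k) (hkk : k ≤ k') (h2 : k' ≤ K) : (p k).1 ≤ (p k').1 := by
  induction k' , hkk using Nat.le_induction with
  | base => exact le_refl _
  | succ m hm ih =>
      exact le_trans (ih (by omega)) (warp_step h (h1.trans hm) (by omega)).1.1

lemma warp_hits {n W K : ℕ} {p : ℕ → ℕ × ℕ} (h : IsWarpPath n W K p)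
    {j : ℕ} (hj1 : 1 ≤ j) (hj2 : j ≤ n) :
    ∃ k, 1 ≤ k ∧ k ≤ K ∧ (p k).2 = j := by
  have hK := h.1
  have hPK : (p K).2 = n := by rw [h.2.2.1]
  have h1 : (p 1).2 = 1 := by rw [h.2.1]
  have hwit : ∃ k, 1 ≤ k ∧ k ≤ K ∧ j ≤ (p k).2 := ⟨K, hK, le_refl _, by omega⟩
  classical
  obtain ⟨hk01, hk0K, hk0j⟩ := Nat.find_spec hwit
  refine ⟨Nat.find hwit, hk01, hk0K, ?_⟩
  rcases eq_or_lt_of_le hk01 with heq | hlt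
  · have : (p (Nat.find hwit)).2 = 1 := by rw [← heq]; exact h1
    omega
  · have hmin := Nat.find_min hwit (m := Nat.find hwit - 1) (by omega)
    push_neg at hmin
    have hlt' : (p (Nat.find hwit - 1)).2 < j := hmin (by omega) (by omega)
    have hstep := (warp_step h (k := Nat.find hwit - 1) (by omega) (by omega)).2.2
    have heq1 : Nat.find hwit - 1 + 1 = Nat.find hwit := by omega
    rw [heq1] at hstep
    omega

/-- Soundness of the LB_PC (point clustering) lower bound: if, for each candidate index
`j`, the finite nonempty sets `S j 1, …, S j (Kc j)` cover the query points in the window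
of `c j`, then the sum over `j` of the squared minimum box distance over the clusters is
at most the squared cost of every window-`W` warping path, hence at most `DTW²_W(Q,C)`. -/
theorem lbpc_le_dtw {D : ℕ} (n W : ℕ) (hn : 1 ≤ n)
    (q c : ℕ → EuclideanSpace ℝ (Fin D))
    (Kc : ℕ → ℕ) (hKc : ∀ j, 1 ≤ j → j ≤ n → 1 ≤ Kc j)
    (S : ℕ → ℕ → Set (EuclideanSpace ℝ (Fin D)))
    (hfin : ∀ j k, 1 ≤ j → j ≤ n → 1 ≤ k → k ≤ Kc j → (S j k).Finite)
    (hne : ∀ j k, 1 ≤ j → j ≤ n → 1 ≤ k → k ≤ Kc j → (S j k).Nonempty)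
    (hcover : ∀ j, 1 ≤ j → j ≤ n →
      {x | ∃ i, 1 ≤ i ∧ i ≤ n ∧ |(i : ℤ) - (j : ℤ)| ≤ (W : ℤ) ∧ x = q i} ⊆
        ⋃ k ∈ Finset.Icc 1 (Kc j), S j k)
    (K : ℕ) (π : ℕ → ℕ × ℕ) (hπ : IsWarpPath n W K π) :
    ∑ j ∈ Finset.Icc 1 n,
        (sInf {x : ℝ | ∃ k, 1 ≤ k ∧ k ≤ Kc j ∧ x = boxDist (c j) (S j k)}) ^ 2 ≤
      ∑ k ∈ Finset.Icc 1 K, ‖q (π k).1 - c (π k).2‖ ^ 2 := by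
  classical
  set A : ℕ → ℝ := fun j =>
    sInf {x : ℝ | ∃ k, 1 ≤ k ∧ k ≤ Kc j ∧ x = boxDist (c j) (S j k)} with hA
  set g : ℕ → ℝ := fun k => ‖q (π k).1 - c (π k).2‖ ^ 2 with hg
  have key : ∀ j, ∃ k, j ∈ Finset.Icc 1 n →
      (k ∈ Finset.Icc 1 K ∧ (π k).2 = j ∧ A j ^ 2 ≤ g k) := by
    intro j
    by_cases hj : j ∈ Finset.Icc 1 n
    · rw [Finset.mem_Icc] at hj
      obtain ⟨hj1, hj2⟩ := hj
      obtain ⟨k, hk1, hkK, hkj⟩ := warp_hits hπ hj1 hj2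
      refine ⟨k, fun _ => ⟨Finset.mem_Icc.mpr ⟨hk1, hkK⟩, hkj, ?_⟩⟩
      -- the matched query index
      set i := (π k).1 with hi
      have hi1 : 1 ≤ i := by
        have := warp_mono1 hπ (le_refl 1) hk1 hkK
        rw [hπ.2.1] at this; exact this
      have hin : i ≤ n := by
        have := warp_mono1 hπ hk1 hkK (le_refl K)
        rw [hπ.2.2.1] at this; exact this
      have hwin : |(i : ℤ) - (j : ℤ)| ≤ (W : ℤ) := by
        have := hπ.2.2.2.2 k hk1 hkK
        rwa [hkj] at this
      have hmem : q i ∈ ⋃ k' ∈ Finset.Icc 1 (Kc j), S j k' :=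
        hcover j hj1 hj2 ⟨i, hi1, hin, hwin, rfl⟩
      simp only [Set.mem_iUnion] at hmem
      obtain ⟨k', hk', hqmem⟩ := hmem
      rw [Finset.mem_Icc] at hk'
      -- elements of the sInf set are nonneg
      have hsetne : (boxDist (c j) (S j k')) ∈
          {x : ℝ | ∃ m, 1 ≤ m ∧ m ≤ Kc j ∧ x = boxDist (c j) (S j m)} :=
        ⟨k', hk'.1, hk'.2, rfl⟩
      have hbdd : BddBelow {x : ℝ | ∃ m, 1 ≤ m ∧ m ≤ Kc j ∧ x = boxDist (c j) (S j m)} :=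
        ⟨0, fun x ⟨m, _, _, hx⟩ => hx ▸ boxDist_nonneg _ _⟩
      have hInf_le : A j ≤ boxDist (c j) (S j k') := csInf_le hbdd hsetne
      have hInf_nonneg : 0 ≤ A j :=
        le_csInf ⟨_, hsetne⟩ (fun x ⟨m, _, _, hx⟩ => hx ▸ boxDist_nonneg _ _)
      have hbd_le : boxDist (c j) (S j k') ≤ ‖q i - c j‖ :=
        boxDist_le _ _ _ (hfin j k' hj1 hj2 hk'.1 hk'.2) hqmem
      have hfinal : A j ≤ ‖q (π k).1 - c (π k).2‖ := by
        rw [hkj]; exact le_trans hInf_le hbd_le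
      exact pow_le_pow_left₀ hInf_nonneg hfinal 2
    · exact ⟨0, fun h => absurd h hj⟩
  choose f hf using key
  calc ∑ j ∈ Finset.Icc 1 n, A j ^ 2
      ≤ ∑ j ∈ Finset.Icc 1 n, g (f j) :=
        Finset.sum_le_sum (fun j hj => (hf j hj).2.2)
    _ = ∑ k ∈ (Finset.Icc 1 n).image f, g k := by
        rw [Finset.sum_image]
        intro x hx y hy hxy
        have h1 := (hf x hx).2.1
        have h2 := (hf y hy).2.1
        rw [← h1, ← h2, hxy]
    _ ≤ ∑ k ∈ Finset.Icc 1 K, g k := by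
        apply Finset.sum_le_sum_of_subset_of_nonneg
        · intro k hk
          obtain ⟨j, hj, rfl⟩ := Finset.mem_image.mp hk
          exact (hf j hj).1
        · intro k _ _
          positivity
end

section
/- Let Q = (q_1,…,q_n) and C = (c_1,…,c_n) be sequences in ℝ^D, let W ≥ 0 be an integer, and for each j let T_j ⊆ ℝ^D be a finite nonempty set containing { q_i : 1 ≤ i ≤ n, |i − j| ≤ W }. Then Σ_{j=1}^n bd(c_j, T_j)² ≤ DTW²_W(Q,C), and moreover if additionally T_j ⊆ T'_j for finite sets T'_j, then Σ_{j=1}^n bd(c_j, T'_j)² ≤ Σ_{j=1}^n bd(c_j, T_j)². -/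
lemma boxDist_sq_le_pt {D : ℕ} (c x : EuclideanSpace ℝ (Fin D))
    (S : Set (EuclideanSpace ℝ (Fin D))) (hfin : S.Finite) (hx : x ∈ S) :
    boxDist c S ^ 2 ≤ ‖x - c‖ ^ 2 := by
  have hnn : 0 ≤ ∑ p : Fin D,
      max (c p - sSup ((fun s => s p) '' S)) (max (sInf ((fun s => s p) '' S) - c p) 0) ^ 2 :=
    Finset.sum_nonneg fun p _ => sq_nonneg _
  rw [boxDist, Real.sq_sqrt hnn]
  have hnorm : ‖x - c‖ ^ 2 = ∑ p : Fin D, (x p - c p) ^ 2 := by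
    rw [EuclideanSpace.norm_eq, Real.sq_sqrt (Finset.sum_nonneg fun p _ => sq_nonneg _)]
    refine Finset.sum_congr rfl fun p _ => ?_
    simp [sq_abs]
  rw [hnorm]
  refine Finset.sum_le_sum fun p _ => ?_
  have hle : x p ≤ sSup ((fun s => s p) '' S) :=
    le_csSup ((hfin.image _).bddAbove) ⟨x, hx, rfl⟩
  have hge : sInf ((fun s => s p) '' S) ≤ x p :=
    csInf_le ((hfin.image _).bddBelow) ⟨x, hx, rfl⟩
  have h1 : max (c p - sSup ((fun s => s p) '' S)) (max (sInf ((fun s => s p) '' S) - c p) 0)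
      ≤ |x p - c p| := by
    apply max_le
    · have : c p - sSup ((fun s => s p) '' S) ≤ c p - x p := by linarith
      calc c p - sSup ((fun s => s p) '' S) ≤ c p - x p := this
        _ ≤ |x p - c p| := by rw [abs_sub_comm]; exact le_abs_self _
    · apply max_le
      · calc sInf ((fun s => s p) '' S) - c p ≤ x p - c p := by linarith
          _ ≤ |x p - c p| := le_abs_self _
      · exact abs_nonneg _
  calc max (c p - sSup ((fun s => s p) '' S)) (max (sInf ((fun s => s p) '' S) - c p) 0) ^ 2
      ≤ |x p - c p| ^ 2 := pow_le_pow_left₀ (le_max_of_le_right (le_max_right _ _)) h1 2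
    _ = (x p - c p) ^ 2 := sq_abs _

lemma boxDist_sq_mono {D : ℕ} (c : EuclideanSpace ℝ (Fin D))
    (S S' : Set (EuclideanSpace ℝ (Fin D))) (hS : S.Nonempty) (hfin' : S'.Finite)
    (hsub : S ⊆ S') : boxDist c S' ^ 2 ≤ boxDist c S ^ 2 := by
  rw [boxDist, boxDist, Real.sq_sqrt (Finset.sum_nonneg fun p _ => sq_nonneg _),
    Real.sq_sqrt (Finset.sum_nonneg fun p _ => sq_nonneg _)]
  refine Finset.sum_le_sum fun p _ => ?_
  have hsup : sSup ((fun s => s p) '' S) ≤ sSup ((fun s => s p) '' S') :=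
    csSup_le_csSup ((hfin'.image _).bddAbove) (hS.image _) (Set.image_mono hsub)
  have hinf : sInf ((fun s => s p) '' S') ≤ sInf ((fun s => s p) '' S) :=
    csInf_le_csInf ((hfin'.image _).bddBelow) (hS.image _) (Set.image_mono hsub)
  have h1 : max (c p - sSup ((fun s => s p) '' S')) (max (sInf ((fun s => s p) '' S') - c p) 0)
      ≤ max (c p - sSup ((fun s => s p) '' S)) (max (sInf ((fun s => s p) '' S) - c p) 0) := by
    apply max_le
    · exact le_max_of_le_left (by linarith)
    · apply max_le
      · exact le_max_of_le_right (le_max_of_le_left (by linarith))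
      · exact le_max_of_le_right (le_max_right _ _)
  exact pow_le_pow_left₀ (le_max_of_le_right (le_max_right _ _)) h1 2

section Path
variable {n W K : ℕ} {π : ℕ → ℕ × ℕ}

lemma warp_step_fst (hπ : IsWarpPath n W K π) {k : ℕ} (h1 : 1 ≤ k) (h2 : k < K) :
    (π k).1 ≤ (π (k+1)).1 ∧ (π (k+1)).1 ≤ (π k).1 + 1 := by
  rcases hπ.2.2.2.1 k h1 h2 with h | h | h <;> rw [h] <;> simp

lemma warp_step_snd (hπ : IsWarpPath n W K π) {k : ℕ} (h1 : 1 ≤ k) (h2 : k < K) :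
    (π k).2 ≤ (π (k+1)).2 ∧ (π (k+1)).2 ≤ (π k).2 + 1 := by
  rcases hπ.2.2.2.1 k h1 h2 with h | h | h <;> rw [h] <;> simp

lemma warp_mono_fst (hπ : IsWarpPath n W K π) :
    ∀ d a, 1 ≤ a → a + d ≤ K → (π a).1 ≤ (π (a + d)).1 := by
  intro d
  induction d with
  | zero => intro a _ _; simp
  | succ d ih =>
    intro a ha hK
    have h1 : 1 ≤ a + d := le_trans ha (Nat.le_add_right _ _)
    have h2 : a + d < K := by omega
    calc (π a).1 ≤ (π (a + d)).1 := ih a ha (by omega)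
      _ ≤ (π (a + d + 1)).1 := (warp_step_fst hπ h1 h2).1
      _ = (π (a + (d+1))).1 := by ring_nf

lemma warp_mono_snd (hπ : IsWarpPath n W K π) :
    ∀ d a, 1 ≤ a → a + d ≤ K → (π a).2 ≤ (π (a + d)).2 := by
  intro d
  induction d with
  | zero => intro a _ _; simp
  | succ d ih =>
    intro a ha hK
    have h1 : 1 ≤ a + d := le_trans ha (Nat.le_add_right _ _)
    have h2 : a + d < K := by omega
    calc (π a).2 ≤ (π (a + d)).2 := ih a ha (by omega)
      _ ≤ (π (a + d + 1)).2 := (warp_step_snd hπ h1 h2).1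
      _ = (π (a + (d+1))).2 := by ring_nf

lemma warp_fst_bounds (hπ : IsWarpPath n W K π) {k : ℕ} (h1 : 1 ≤ k) (h2 : k ≤ K) :
    1 ≤ (π k).1 ∧ (π k).1 ≤ n := by
  have hl := warp_mono_fst hπ (k - 1) 1 le_rfl (by omega)
  have hu := warp_mono_fst hπ (K - k) k h1 (by omega)
  rw [show 1 + (k - 1) = k by omega] at hl
  rw [show k + (K - k) = K by omega] at hu
  rw [hπ.2.1] at hl; rw [hπ.2.2.1] at hu
  exact ⟨hl, hu⟩

lemma warp_hits_snd (hπ : IsWarpPath n W K π) {j : ℕ} (h1 : 1 ≤ j) (h2 : j ≤ n) :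
    ∃ k, 1 ≤ k ∧ k ≤ K ∧ (π k).2 = j := by
  have hK : 1 ≤ K := hπ.1
  have hP : ∃ d, j ≤ (π (1 + d)).2 ∧ 1 + d ≤ K := by
    refine ⟨K - 1, ?_, by omega⟩
    rw [show 1 + (K - 1) = K from by omega, hπ.2.2.1]
    exact h2
  classical
  obtain ⟨hd1, hd2⟩ := Nat.find_spec hP
  have hmin : ∀ m, m < Nat.find hP → ¬(j ≤ (π (1 + m)).2 ∧ 1 + m ≤ K) :=
    fun m hm => Nat.find_min hP hm
  set d := Nat.find hP with hdef
  refine ⟨1 + d, by omega, hd2, ?_⟩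
  rcases Nat.eq_zero_or_pos d with h0 | hpos
  · rw [h0] at hd1 ⊢
    simp only [Nat.add_zero] at hd1 ⊢
    have : (π 1).2 = 1 := by rw [hπ.2.1]
    omega
  · have hnot := hmin (d - 1) (by omega)
    push_neg at hnot
    have hle : 1 + (d - 1) ≤ K := by omega
    have hlt : (π (1 + (d - 1))).2 < j := by
      rcases Nat.lt_or_ge (π (1 + (d-1))).2 j with h | h
      · exact h
      · exact absurd hle (by simpa [h] using hnot h)
    have hstep := (warp_step_snd hπ (k := 1 + (d-1)) (by omega) (by omega)).2
    rw [show 1 + (d - 1) + 1 = 1 + d from by omega] at hstep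
    omega

end Path

/-- Soundness of uniform window grouping: if each finite nonempty set `T j` contains all
query points in the window of candidate point `c j`, then `∑_j bd(c_j, T_j)²` is at most
the squared cost of every window-`W` warping path (hence at most `DTW²_W(Q,C)`); and
enlarging each `T j` to a finite superset `T' j` can only decrease the bound. -/
theorem grouped_boxes_le_dtw {D : ℕ} (n W : ℕ) (hn : 1 ≤ n)
    (q c : ℕ → EuclideanSpace ℝ (Fin D))
    (T : ℕ → Set (EuclideanSpace ℝ (Fin D)))
    (hfin : ∀ j, 1 ≤ j → j ≤ n → (T j).Finite)
    (hne : ∀ j, 1 ≤ j → j ≤ n → (T j).Nonempty)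
    (hcontains : ∀ j, 1 ≤ j → j ≤ n →
      {x | ∃ i, 1 ≤ i ∧ i ≤ n ∧ |(i : ℤ) - (j : ℤ)| ≤ (W : ℤ) ∧ x = q i} ⊆ T j)
    (K : ℕ) (π : ℕ → ℕ × ℕ) (hπ : IsWarpPath n W K π)
    (T' : ℕ → Set (EuclideanSpace ℝ (Fin D)))
    (hfin' : ∀ j, 1 ≤ j → j ≤ n → (T' j).Finite)
    (hsub : ∀ j, 1 ≤ j → j ≤ n → T j ⊆ T' j) :
    (∑ j ∈ Finset.Icc 1 n, boxDist (c j) (T j) ^ 2 ≤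
        ∑ k ∈ Finset.Icc 1 K, ‖q (π k).1 - c (π k).2‖ ^ 2) ∧
    ∑ j ∈ Finset.Icc 1 n, boxDist (c j) (T' j) ^ 2 ≤
      ∑ j ∈ Finset.Icc 1 n, boxDist (c j) (T j) ^ 2 := by

  have hK : 1 ≤ K := hπ.1
  constructor
  · -- part 1
    have hex : ∀ j, ∃ k, (1 ≤ j ∧ j ≤ n) → (1 ≤ k ∧ k ≤ K ∧ (π k).2 = j) := by
      intro j
      by_cases h : 1 ≤ j ∧ j ≤ n
      · obtain ⟨k, hk⟩ := warp_hits_snd hπ h.1 h.2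
        exact ⟨k, fun _ => hk⟩
      · exact ⟨0, fun hc => absurd hc h⟩
    choose κ hκ using hex
    have step1 : ∀ j ∈ Finset.Icc 1 n,
        boxDist (c j) (T j) ^ 2 ≤ ‖q (π (κ j)).1 - c ((π (κ j)).2)‖ ^ 2 := by
      intro j hj
      rw [Finset.mem_Icc] at hj
      obtain ⟨hk1, hk2, hk3⟩ := hκ j hj
      have hi := warp_fst_bounds hπ hk1 hk2
      have hwin := hπ.2.2.2.2 (κ j) hk1 hk2
      rw [hk3] at hwin
      rw [hk3]
      have hx : q (π (κ j)).1 ∈ T j :=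
        hcontains j hj.1 hj.2 ⟨(π (κ j)).1, hi.1, hi.2, hwin, rfl⟩
      exact boxDist_sq_le_pt _ _ _ (hfin j hj.1 hj.2) hx
    have hinj : ∀ x ∈ Finset.Icc 1 n, ∀ y ∈ Finset.Icc 1 n, κ x = κ y → x = y := by
      intro x hx y hy hxy
      rw [Finset.mem_Icc] at hx hy
      have h1 := (hκ x hx).2.2
      have h2 := (hκ y hy).2.2
      rw [← h1, ← h2, hxy]
    have hsubset : (Finset.Icc 1 n).image κ ⊆ Finset.Icc 1 K := by
      intro k hk
      obtain ⟨j, hj, rfl⟩ := Finset.mem_image.mp hk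
      rw [Finset.mem_Icc] at hj ⊢
      exact ⟨(hκ j hj).1, (hκ j hj).2.1⟩
    calc ∑ j ∈ Finset.Icc 1 n, boxDist (c j) (T j) ^ 2
        ≤ ∑ j ∈ Finset.Icc 1 n, ‖q (π (κ j)).1 - c ((π (κ j)).2)‖ ^ 2 :=
          Finset.sum_le_sum step1
      _ = ∑ k ∈ (Finset.Icc 1 n).image κ, ‖q (π k).1 - c ((π k).2)‖ ^ 2 :=
          by rw [Finset.sum_image hinj]
      _ ≤ ∑ k ∈ Finset.Icc 1 K, ‖q (π k).1 - c (π k).2‖ ^ 2 :=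
          Finset.sum_le_sum_of_subset_of_nonneg hsubset (fun _ _ _ => sq_nonneg _)
  · -- part 2
    refine Finset.sum_le_sum fun j hj => ?_
    rw [Finset.mem_Icc] at hj
    exact boxDist_sq_mono _ _ _ (hne j hj.1 hj.2) (hfin' j hj.1 hj.2) (hsub j hj.1 hj.2)
end
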